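/- arXiv:2510.11105 — 5 statements merged into one kernel-verified Lean document; each statement's English description precedes it below -/
import Mathlib

section
/- The Sibuya probabilities satisfy the asymptotic p_n ~ α n^{-(α+1)}/Γ(1-α) as n → ∞, i.e., p_n · n^{α+1} → α/Γ(1-α). -/
/-- Rising factorial `[a]_b = a(a+1)⋯(a+b-1)`. -/
noncomputable def riseFact (a : ℝ) (b : ℕ) : ℝ :=
  ∏ j ∈ Finset.range b, (a + j)

/-- p_n · n^{α+1} → α/Γ(1-α) as n → ∞, where
p_n = α·[1-α]_{n-1}/n!. -/
theorem sibuya_tail_asymptotics (α : ℝ) (hα : α ∈ Set.Ioo (0:ℝ) 1)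
    (p : ℕ → ℝ) (hp : ∀ n, 1 ≤ n → p n = α * riseFact (1 - α) (n - 1) / n.factorial) :
    Filter.Tendsto (fun n : ℕ => p n * (n : ℝ) ^ (α + 1)) Filter.atTop
      (nhds (α / Real.Gamma (1 - α))) := by
  obtain ⟨hα0, hα1⟩ := hα
  have h1α : 0 < 1 - α := by linarith
  have hΓ : Real.Gamma (1 - α) ≠ 0 := (Real.Gamma_pos_of_pos h1α).ne'
  have hlim : Filter.Tendsto
      (fun n : ℕ => α * ((n : ℝ) / (n + -α)) * ((n : ℝ) / (n + (1 - α))) /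
        Real.GammaSeq (1 - α) n) Filter.atTop
      (nhds (α * 1 * 1 / Real.Gamma (1 - α))) :=
    (((tendsto_const_nhds.mul (tendsto_natCast_div_add_atTop (-α))).mul
      (tendsto_natCast_div_add_atTop (1 - α))).div
      (Real.GammaSeq_tendsto_Gamma (1 - α)) hΓ)
  rw [mul_one, mul_one] at hlim
  refine Filter.Tendsto.congr' ?_ hlim
  filter_upwards [Filter.eventually_ge_atTop 1] with n hn
  obtain ⟨m, rfl⟩ : ∃ m, n = m + 1 := ⟨n - 1, (Nat.succ_pred_eq_of_pos hn).symm⟩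
  rw [hp _ hn]
  simp only [Real.GammaSeq, riseFact, Nat.add_sub_cancel]
  have hprod : ∏ j ∈ Finset.range (m + 1 + 1), (1 - α + (j : ℝ)) =
      (∏ j ∈ Finset.range m, (1 - α + (j : ℝ))) * (1 - α + (m : ℝ)) *
        (1 - α + ((m : ℝ) + 1)) := by
    rw [Finset.prod_range_succ, Finset.prod_range_succ]; push_cast; ring
  rw [hprod]
  have hN : (0:ℝ) < (m : ℝ) + 1 := by positivity
  have hP : 0 < ∏ j ∈ Finset.range m, (1 - α + (j : ℝ)) := by
    apply Finset.prod_pos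
    intro j _
    have : (0:ℝ) ≤ j := Nat.cast_nonneg j
    linarith
  have hfac : (0:ℝ) < ((m + 1).factorial : ℝ) := by positivity
  have hd1 : (0:ℝ) < 1 - α + (m : ℝ) := by
    have : (0:ℝ) ≤ m := Nat.cast_nonneg m
    linarith
  have hd2 : (0:ℝ) < 1 - α + ((m : ℝ) + 1) := by linarith
  have hNp : (0:ℝ) < ((m : ℝ) + 1) ^ (1 - α) := Real.rpow_pos_of_pos hN _
  have key : ((m : ℝ) + 1) ^ (α + 1) * ((m : ℝ) + 1) ^ (1 - α) =
      ((m : ℝ) + 1) * ((m : ℝ) + 1) := by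
    rw [← Real.rpow_add hN, show α + 1 + (1 - α) = ((2:ℕ):ℝ) by push_cast; ring,
      Real.rpow_natCast]
    ring
  have hpow : ((m : ℝ) + 1) ^ (α + 1) =
      (((m : ℝ) + 1) * ((m : ℝ) + 1)) / ((m : ℝ) + 1) ^ (1 - α) := by
    rw [eq_div_iff hNp.ne']; exact key
  push_cast
  rw [hpow]
  field_simp
  have hq : (((m:ℝ) + 1 + -α) * ((m:ℝ) + 1 + (1 - α)) *
      (((m:ℝ) + 1) ^ (1 - α) * (((m + 1).factorial : ℕ) : ℝ))) ≠ 0 := by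
    have h1 : (0:ℝ) < (m:ℝ) + 1 + -α := by linarith
    have h2 : (0:ℝ) < (m:ℝ) + 1 + (1 - α) := by linarith
    exact mul_ne_zero (mul_ne_zero h1.ne' h2.ne') (mul_ne_zero hNp.ne' hfac.ne')
  rw [div_eq_iff (show (0:ℝ) < (m:ℝ) + 1 + -α by linarith).ne']
  ring
end

section
/- For α ∈ (0,1) and n ≥ 1, (1/n)·[z^{n-1}]((z/(1-(1-z)^{1/α}))^n) = α·[1-α]_{n-1}/n!. -/
/-- The `n`-th Taylor coefficient at `0` of a real function. -/
noncomputable def taylorCoeff (f : ℝ → ℝ) (n : ℕ) : ℝ :=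
  iteratedDeriv n f 0 / n.factorial

/-- The branching mechanism φ(z) = z/(1-(1-z)^{1/α}), analytically extended by
φ(0) = α. -/
noncomputable def sibuyaPhi (α : ℝ) (z : ℝ) : ℝ :=
  if z = 0 then α else z / (1 - (1 - z) ^ (1/α))

open Complex Metric Function Finset

private lemma circleIntegral_add' {f g : ℂ → ℂ} {c : ℂ} {R : ℝ}
    (hf : CircleIntegrable f c R) (hg : CircleIntegrable g c R) :
    (∮ z in C(c, R), (f z + g z)) = (∮ z in C(c, R), f z) + ∮ z in C(c, R), g z := by
  simp only [circleIntegral, smul_add]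
  exact intervalIntegral.integral_add hf.out hg.out

private lemma dslope_iterate_expansion (F : ℂ → ℂ) (k : ℕ) {w : ℂ} (hw : w ≠ 0) :
    F w = (∑ j ∈ Finset.range k, ((swap dslope 0)^[j] F 0) * w ^ j)
      + w ^ k * ((swap dslope 0)^[k] F w) := by
  induction k with
  | zero => simp
  | succ k ih =>
    rw [ih, Finset.sum_range_succ]
    have h1 : (swap dslope 0)^[k+1] F w
        = ((swap dslope 0)^[k] F w - (swap dslope 0)^[k] F 0) / w := by
      rw [Function.iterate_succ_apply']
      simp only [swap]
      rw [dslope_of_ne _ hw, slope_def_field, sub_zero]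
    rw [h1]
    field_simp
    ring

private lemma coeff_eq_iteratedDeriv {f : ℂ → ℂ} {p : FormalMultilinearSeries ℂ ℂ ℂ}
    {r : ENNReal} (h : HasFPowerSeriesOnBall f p 0 r) (k : ℕ) :
    (k.factorial : ℂ) * p.coeff k = iteratedDeriv k f 0 := by
  have h2 := h.factorial_smul (1:ℂ) k
  rw [iteratedFDeriv_apply_eq_iteratedDeriv_mul_prod] at h2
  have h3 : p k (fun _ => (1:ℂ)) = p.coeff k := rfl
  rw [h3, nsmul_eq_mul] at h2
  simpa using h2

private lemma slit_of_ball {w : ℂ} (hw : ‖w‖ < 1) : (1 - w) ∈ Complex.slitPlane := by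
  rw [Complex.mem_slitPlane_iff]
  left
  have h1 : w.re ≤ ‖w‖ := Complex.re_le_norm w
  simp only [Complex.sub_re, Complex.one_re]
  linarith

private lemma hasDerivAt_cpow_aux (c : ℂ) {w : ℂ} (hw : ‖w‖ < 1) :
    HasDerivAt (fun z : ℂ => (1 - z) ^ c) (-(c * (1 - w) ^ (c - 1))) w := by
  have hd : HasDerivAt (fun z : ℂ => 1 - z) (-1) w := by
    simpa using (hasDerivAt_id w).const_sub 1
  have := hd.cpow_const (c := c) (slit_of_ball hw)
  simpa [mul_comm, mul_assoc] using this

private lemma analyticOnNhd_cpow_aux (c : ℂ) :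
    AnalyticOnNhd ℂ (fun z : ℂ => (1 - z) ^ c) (ball 0 1) := by
  intro z hz
  have habs : ‖z‖ < 1 := by simpa [mem_ball, Complex.dist_eq] using hz
  exact (analyticAt_const.sub analyticAt_id).cpow analyticAt_const (slit_of_ball habs)

private lemma iteratedDeriv_cpow_aux (a : ℂ) (k : ℕ) :
    ∀ w ∈ ball (0:ℂ) 1, iteratedDeriv k (fun w : ℂ => a * (1 - w) ^ (a - 1)) w
      = a * (∏ i ∈ Finset.range k, ((i:ℂ) + 1 - a)) * (1 - w) ^ (a - 1 - k) := by
  induction k with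
  | zero => intro w _; simp
  | succ k ih =>
    intro w hw
    have habs : ‖w‖ < 1 := by simpa [mem_ball, Complex.dist_eq] using hw
    rw [iteratedDeriv_succ]
    have hev : iteratedDeriv k (fun w : ℂ => a * (1 - w) ^ (a - 1))
        =ᶠ[nhds w] fun w => a * (∏ i ∈ Finset.range k, ((i:ℂ) + 1 - a)) * (1 - w) ^ (a - 1 - k) := by
      filter_upwards [isOpen_ball.mem_nhds hw] with y hy
      exact ih y hy
    rw [hev.deriv_eq]
    have hd := (hasDerivAt_cpow_aux (a - 1 - k) habs).const_mul
      (a * (∏ i ∈ Finset.range k, ((i:ℂ) + 1 - a)))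
    rw [hd.deriv, Finset.prod_range_succ]
    have hexp : a - 1 - (k:ℂ) - 1 = a - 1 - ((k+1 : ℕ) : ℂ) := by push_cast; ring
    rw [hexp]
    push_cast
    ring

private lemma pointwise_identity (m : ℕ) (z U U' B c R0 K : ℂ) (hz : z ≠ 0) (hU : U ≠ 0)
    (hK : K = U + z * U') (h1 : (B + c * (z*U)^m + (z*U)^(m+1) * R0) * K = 1) :
    (1/z)^m * (z⁻¹ * (U⁻¹)^(m+1))
      = c * z⁻¹ + (B * (K / (z*U)^(m+1)) + (c * (U'/U) + R0 * K)) := by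
  have hzU : z * U ≠ 0 := mul_ne_zero hz hU
  have hpow : (z*U)^(m+1) ≠ 0 := pow_ne_zero _ hzU
  have e1 : (1/z)^m * (z⁻¹ * (U⁻¹)^(m+1)) = ((z*U)^(m+1))⁻¹ := by
    ring
  rw [e1]
  calc ((z*U)^(m+1))⁻¹
      = ((B + c * (z*U)^m + (z*U)^(m+1) * R0) * K) * ((z*U)^(m+1))⁻¹ := by rw [h1, one_mul]
    _ = c * z⁻¹ + (B * (K / (z*U)^(m+1)) + (c * (U'/U) + R0 * K)) := by
        subst hK
        field_simp
        ring

namespace SibuyaAux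

variable (α : ℝ)

noncomputable def gC : ℂ → ℂ := fun z => 1 - (1 - z) ^ ((α:ℂ)⁻¹)
noncomputable def GC : ℂ → ℂ := fun w => 1 - (1 - w) ^ (α:ℂ)
noncomputable def Gd : ℂ → ℂ := fun w => (α:ℂ) * (1 - w) ^ ((α:ℂ) - 1)
noncomputable def gd : ℂ → ℂ := fun z => (α:ℂ)⁻¹ * (1 - z) ^ ((α:ℂ)⁻¹ - 1)
noncomputable def uu : ℂ → ℂ := dslope (gC α) 0

lemma gC_zero : gC α 0 = 0 := by simp [gC]

lemma hasDerivAt_gC {z : ℂ} (hz : ‖z‖ < 1) : HasDerivAt (gC α) (gd α z) z := by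
  have := (hasDerivAt_cpow_aux ((α:ℂ)⁻¹) hz).const_sub 1
  exact (by simpa [gd] using this : HasDerivAt (fun x : ℂ => 1 - (1 - x) ^ ((α:ℂ)⁻¹)) (gd α z) z)

lemma hasDerivAt_GC {w : ℂ} (hw : ‖w‖ < 1) : HasDerivAt (GC α) (Gd α w) w := by
  have := (hasDerivAt_cpow_aux ((α:ℂ)) hw).const_sub 1
  exact (by simpa [Gd] using this : HasDerivAt (fun x : ℂ => 1 - (1 - x) ^ (α:ℂ)) (Gd α w) w)

lemma analyticOnNhd_gC : AnalyticOnNhd ℂ (gC α) (ball 0 1) := by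
  intro z hz
  exact analyticAt_const.sub (analyticOnNhd_cpow_aux _ z hz)

lemma analyticOnNhd_Gd : AnalyticOnNhd ℂ (Gd α) (ball 0 1) := by
  intro z hz
  exact analyticAt_const.mul (analyticOnNhd_cpow_aux _ z hz)

lemma analyticOnNhd_gd : AnalyticOnNhd ℂ (gd α) (ball 0 1) := by
  intro z hz
  exact analyticAt_const.mul (analyticOnNhd_cpow_aux _ z hz)

lemma uu_zero : uu α 0 = (α:ℂ)⁻¹ := by
  rw [uu, dslope_same]
  have h := (hasDerivAt_gC α (z := 0) (by simp)).deriv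
  rw [h, gd]
  simp

lemma gC_eq_mul_uu (z : ℂ) : gC α z = z * uu α z := by
  rcases eq_or_ne z 0 with rfl | hz
  · simp [gC_zero]
  · rw [uu, dslope_of_ne _ hz, slope_def_field, gC_zero, sub_zero, sub_zero]
    field_simp

lemma analyticOnNhd_uu : AnalyticOnNhd ℂ (uu α) (ball 0 1) := by
  intro z hz
  rcases eq_or_ne z 0 with rfl | hz0
  · obtain ⟨p, hp⟩ := analyticOnNhd_gC α 0 (by simp)
    exact ⟨p.fslope, hp.has_fpower_series_dslope_fslope⟩
  · have hev : (fun w : ℂ => gC α w / w) =ᶠ[nhds z] uu α := by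
      filter_upwards [isOpen_ne.mem_nhds hz0] with w hw
      rw [uu, dslope_of_ne _ hw, slope_def_field, gC_zero, sub_zero, sub_zero]
    exact ((analyticOnNhd_gC α z hz).div analyticAt_id hz0).congr hev

lemma comp_id (hα0 : 0 < α) {z : ℂ} (hz : ‖z‖ < 1)
    (harg : |Complex.arg (1 - z)| < Real.pi * α) : GC α (gC α z) = z := by
  have ha : (α:ℂ) ≠ 0 := Complex.ofReal_ne_zero.mpr (ne_of_gt hα0)
  have him : (Complex.log (1 - z) * ((α:ℂ)⁻¹)).im = Complex.arg (1 - z) * α⁻¹ := by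
    rw [← Complex.ofReal_inv, Complex.mul_im]
    simp [Complex.log_im]
  rw [abs_lt] at harg
  have h1 : -Real.pi < (Complex.log (1 - z) * ((α:ℂ)⁻¹)).im := by
    rw [him]
    have h2 : -(Real.pi * α) * α⁻¹ < Complex.arg (1 - z) * α⁻¹ :=
      mul_lt_mul_of_pos_right harg.1 (by positivity)
    have h3 : -(Real.pi * α) * α⁻¹ = -Real.pi := by field_simp
    linarith [h3 ▸ h2]
  have h2 : (Complex.log (1 - z) * ((α:ℂ)⁻¹)).im ≤ Real.pi := by
    rw [him]
    have h2 : Complex.arg (1 - z) * α⁻¹ < (Real.pi * α) * α⁻¹ :=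
      mul_lt_mul_of_pos_right harg.2 (by positivity)
    have h3 : (Real.pi * α) * α⁻¹ = Real.pi := by field_simp
    linarith [h3 ▸ h2]
  have key := Complex.cpow_mul (x := 1 - z) (y := (α:ℂ)⁻¹) (α:ℂ) h1 h2
  rw [GC, gC, sub_sub_cancel, ← key, inv_mul_cancel₀ ha, Complex.cpow_one, sub_sub_cancel]

lemma master (hα0 : 0 < α) (hα1 : α < 1) (m : ℕ) :
    ∃ δ : ℝ, 0 < δ ∧ δ ≤ 1 ∧
      AnalyticOnNhd ℂ (fun z => ((uu α z)⁻¹) ^ (m+1)) (ball (0:ℂ) δ) ∧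
      (∀ z : ℂ, ‖z‖ < δ → uu α z ≠ 0) ∧
      iteratedDeriv m (fun z => ((uu α z)⁻¹) ^ (m+1)) 0
        = (α:ℂ) * ∏ i ∈ Finset.range m, ((i:ℂ) + 1 - (α:ℂ)) := by
  have ha0 : (α:ℂ) ≠ 0 := Complex.ofReal_ne_zero.mpr (ne_of_gt hα0)
  -- select δ
  have hδex : ∃ δ : ℝ, 0 < δ ∧ δ ≤ 1 ∧ ∀ z : ℂ, ‖z‖ < δ →
      (uu α z ≠ 0 ∧ ‖(gC α z)‖ < 1 ∧ GC α (gC α z) = z) := by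
    have e1 : ∀ᶠ z : ℂ in nhds 0, uu α z ≠ 0 := by
      have hc : ContinuousAt (uu α) 0 := (analyticOnNhd_uu α 0 (by simp)).continuousAt
      have hne : uu α 0 ≠ 0 := by
        rw [uu_zero]; exact inv_ne_zero ha0
      exact hc.eventually_ne hne
    have habs1 : ∀ᶠ w : ℂ in nhds 0, ‖w‖ < 1 := by
      filter_upwards [Metric.ball_mem_nhds (0:ℂ) one_pos] with w hw
      simpa [Complex.dist_eq] using hw
    have e2 : ∀ᶠ z : ℂ in nhds 0, ‖(gC α z)‖ < 1 := by
      have hc : ContinuousAt (gC α) 0 := (analyticOnNhd_gC α 0 (by simp)).continuousAt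
      have hc2 : Filter.Tendsto (gC α) (nhds 0) (nhds 0) := by
        simpa [gC_zero] using hc.tendsto
      exact hc2.eventually habs1
    have e3 : ∀ᶠ z : ℂ in nhds 0, |Complex.arg (1 - z)| < Real.pi * α := by
      have hπα : 0 < Real.pi * α := by positivity
      have hc : ContinuousAt (fun z : ℂ => Complex.arg (1 - z)) 0 := by
        apply (Complex.continuousAt_arg ?_).comp
          ((continuous_const.sub continuous_id).continuousAt)
        simpa using Complex.one_mem_slitPlane
      have hval : Complex.arg (1 - (0:ℂ)) = 0 := by simp
      have h4 : ∀ᶠ y : ℝ in nhds (Complex.arg (1 - (0:ℂ))), |y| < Real.pi * α := by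
        rw [hval]
        filter_upwards [Metric.ball_mem_nhds (0:ℝ) hπα] with y hy
        simpa [Real.dist_eq] using hy
      exact hc.tendsto.eventually h4
    have hcomb := (e1.and (e2.and (e3.and habs1)))
    rw [Metric.eventually_nhds_iff] at hcomb
    obtain ⟨ε, hε, hP⟩ := hcomb
    refine ⟨min (ε/2) 1, by positivity, min_le_right _ _, ?_⟩
    intro z hz
    have hze : dist z 0 < ε := by
      rw [Complex.dist_eq, sub_zero]
      calc ‖z‖ < min (ε/2) 1 := hz
        _ ≤ ε/2 := min_le_left _ _
        _ < ε := by linarith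
    obtain ⟨h1, h2, h3, h4⟩ := hP hze
    exact ⟨h1, h2, comp_id α hα0 h4 h3⟩
  obtain ⟨δ, hδ0, hδ1, hδP⟩ := hδex
  have hball1 : ∀ z : ℂ, ‖z‖ < δ → ‖z‖ < 1 :=
    fun z hz => lt_of_lt_of_le hz hδ1
  have hmem1 : ∀ z : ℂ, ‖z‖ < δ → z ∈ ball (0:ℂ) 1 := by
    intro z hz; simpa [mem_ball, Complex.dist_eq] using hball1 z hz
  have hmemδ : ∀ z : ℂ, ‖z‖ < δ → z ∈ ball (0:ℂ) δ := by
    intro z hz; simpa [mem_ball, Complex.dist_eq] using hz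
  set Φ : ℂ → ℂ := fun z => ((uu α z)⁻¹) ^ (m+1) with hΦdef
  have hΦan : AnalyticOnNhd ℂ Φ (ball 0 δ) := by
    intro z hz
    have hz' : ‖z‖ < δ := by simpa [mem_ball, Complex.dist_eq] using hz
    exact (((analyticOnNhd_uu α) z (hmem1 z hz')).inv (hδP z hz').1).pow _
  have hKey : ∀ z : ℂ, ‖z‖ < δ → Gd α (gC α z) * gd α z = 1 := by
    intro z hz
    have hgd := hasDerivAt_gC α (hball1 z hz)
    have hGd := hasDerivAt_GC α (hδP z hz).2.1
    have hcomp := hGd.comp z hgd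
    have hev : (GC α ∘ gC α) =ᶠ[nhds z] id := by
      filter_upwards [isOpen_ball.mem_nhds (hmemδ z hz)] with w hw
      exact (hδP w (by simpa [mem_ball, Complex.dist_eq] using hw)).2.2
    have h1 := hcomp.deriv
    rw [hev.deriv_eq, deriv_id] at h1
    exact h1.symm
  have hgd_eq : ∀ z : ℂ, ‖z‖ < δ → gd α z = uu α z + z * deriv (uu α) z := by
    intro z hz
    have hud : HasDerivAt (uu α) (deriv (uu α) z) z :=
      ((analyticOnNhd_uu α) z (hmem1 z hz)).differentiableAt.hasDerivAt
    have hmul : HasDerivAt (fun y : ℂ => y * uu α y) (1 * uu α z + z * deriv (uu α) z) z :=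
      (hasDerivAt_id z).mul hud
    have hfun : (fun y : ℂ => y * uu α y) = gC α := by
      funext y; rw [gC_eq_mul_uu]
    rw [hfun] at hmul
    have := (hasDerivAt_gC α (hball1 z hz)).unique hmul
    simpa using this
  set r := δ / 2 with hrdef
  have hr0 : 0 < r := by positivity
  have hrδ : r < δ := by rw [hrdef]; linarith
  have hrsub : closedBall (0:ℂ) r ⊆ ball 0 δ := closedBall_subset_ball hrδ
  have habs_of_cball : ∀ z : ℂ, z ∈ closedBall (0:ℂ) r → ‖z‖ < δ := by
    intro z hz
    have := hrsub hz
    simpa [mem_ball, Complex.dist_eq] using this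
  have habs_of_sphere : ∀ z : ℂ, z ∈ sphere (0:ℂ) r → ‖z‖ = r := by
    intro z hz; simpa [Complex.dist_eq] using hz
  -- series of Gd
  obtain ⟨p, hp⟩ : AnalyticAt ℂ (Gd α) 0 := analyticOnNhd_Gd α 0 (by simp)
  set b : ℕ → ℂ := fun j => (Function.swap dslope 0)^[j] (Gd α) 0 with hbdef
  set RR : ℂ → ℂ := (Function.swap dslope 0)^[m+1] (Gd α) with hRRdef
  have hbp : ∀ j, b j = p.coeff j := by
    intro j
    have h1 := (hp.has_fpower_series_iterate_dslope_fslope j).coeff_zero (1 : Fin 0 → ℂ)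
    have h2 : (FormalMultilinearSeries.fslope^[j] p).coeff 0 = p.coeff (0 + j) :=
      FormalMultilinearSeries.coeff_iterate_fslope (p := p) j 0
    rw [hbdef]
    simp only [← h1]
    rw [show ((FormalMultilinearSeries.fslope^[j] p) 0 (1 : Fin 0 → ℂ))
      = (FormalMultilinearSeries.fslope^[j] p).coeff 0 from rfl, h2, zero_add]
  have hRRan : AnalyticOnNhd ℂ RR (ball 0 1) := by
    intro w hw
    rcases eq_or_ne w 0 with rfl | hw0
    · exact (hp.has_fpower_series_iterate_dslope_fslope (m+1)).analyticAt
    · have hev : (fun y => (Gd α y - ∑ j ∈ Finset.range (m+1), b j * y ^ j) / y ^ (m+1))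
          =ᶠ[nhds w] RR := by
        filter_upwards [isOpen_ne.mem_nhds hw0] with y hy
        have hx := dslope_iterate_expansion (Gd α) (m+1) hy
        rw [eq_comm, eq_div_iff (pow_ne_zero _ hy)]
        rw [hRRdef]
        linear_combination -hx
      apply AnalyticAt.congr ?_ hev
      apply AnalyticAt.div
      · apply ((analyticOnNhd_Gd α) w hw).sub
        apply Finset.analyticAt_fun_sum
        intro j _
        exact analyticAt_const.mul (analyticAt_id.pow _)
      · exact analyticAt_id.pow _
      · exact pow_ne_zero _ hw0
  have hbm_val : (Nat.factorial m : ℂ) * b m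
      = (α:ℂ) * ∏ i ∈ Finset.range m, ((i:ℂ) + 1 - (α:ℂ)) := by
    obtain ⟨rp, hrp⟩ := hp
    rw [hbp m, coeff_eq_iteratedDeriv hrp m]
    have h2 := iteratedDeriv_cpow_aux (α:ℂ) m 0 (by simp)
    rw [show Gd α = (fun w : ℂ => (α:ℂ) * (1 - w) ^ ((α:ℂ) - 1)) from rfl, h2]
    simp
  -- power series for Φ
  set Rnn : NNReal := ⟨r, hr0.le⟩ with hRnn
  have hdiff : DifferentiableOn ℂ Φ (closedBall 0 (Rnn:ℝ)) := by
    intro z hz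
    exact (hΦan z (hrsub hz)).differentiableAt.differentiableWithinAt
  have hball : HasFPowerSeriesOnBall Φ (cauchyPowerSeries Φ 0 (Rnn:ℝ)) 0 Rnn :=
    hdiff.hasFPowerSeriesOnBall (by exact_mod_cast hr0)
  -- decomposition functions
  set Wd : ℂ → ℂ := fun z =>
    (∑ j ∈ Finset.range m, b j * gC α z ^ j) * (gd α z / gC α z ^ (m+1)) with hWddef
  set hh : ℂ → ℂ := fun z =>
    b m * (deriv (uu α) z / uu α z) + RR (gC α z) * gd α z with hhhdef
  have sphere_facts : ∀ z ∈ sphere (0:ℂ) r,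
      z ≠ 0 ∧ ‖z‖ < δ ∧ uu α z ≠ 0 ∧ gC α z ≠ 0 := by
    intro z hz
    have hzr := habs_of_sphere z hz
    have hz0 : z ≠ 0 := by
      intro h; rw [h] at hzr; simp at hzr; linarith
    have hzδ : ‖z‖ < δ := by rw [hzr]; exact hrδ
    have hU : uu α z ≠ 0 := (hδP z hzδ).1
    refine ⟨hz0, hzδ, hU, ?_⟩
    rw [gC_eq_mul_uu]
    exact mul_ne_zero hz0 hU
  -- the integrand identity on the sphere
  have hEq : Set.EqOn (fun z => ((1:ℂ)/(z - 0))^m • (z - 0)⁻¹ • Φ z)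
      (fun z => b m * z⁻¹ + (Wd z + hh z)) (sphere (0:ℂ) r) := by
    intro z hz
    obtain ⟨hz0, hzδ, hU, hgC0⟩ := sphere_facts z hz
    have hgCz : gC α z = z * uu α z := gC_eq_mul_uu α z
    have hexp := dslope_iterate_expansion (Gd α) (m+1) hgC0
    rw [Finset.sum_range_succ] at hexp
    have h1 : ((∑ j ∈ Finset.range m, b j * (z * uu α z) ^ j)
        + b m * (z * uu α z) ^ m + (z * uu α z) ^ (m+1) * RR (z * uu α z)) * gd α z = 1 := by
      rw [← hgCz]
      have : (∑ j ∈ Finset.range m, b j * gC α z ^ j)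
          + b m * gC α z ^ m + gC α z ^ (m+1) * RR (gC α z) = Gd α (gC α z) := by
        rw [hexp]
      rw [this]
      exact hKey z hzδ
    have hpi := pointwise_identity m z (uu α z) (deriv (uu α) z)
      (∑ j ∈ Finset.range m, b j * (z * uu α z) ^ j) (b m) (RR (z * uu α z)) (gd α z)
      hz0 hU (hgd_eq z hzδ) h1
    simp only [sub_zero, smul_eq_mul, hΦdef, hWddef, hhhdef, hgCz]
    convert hpi using 3 <;> try ring
  have hanWd : ∀ z : ℂ, ‖z‖ < δ → z ≠ 0 → AnalyticAt ℂ Wd z := by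
    intro z hz hz0
    have hgCa : AnalyticAt ℂ (gC α) z := (analyticOnNhd_gC α) z (hmem1 z hz)
    have hgC0 : gC α z ≠ 0 := by
      rw [gC_eq_mul_uu]; exact mul_ne_zero hz0 (hδP z hz).1
    apply AnalyticAt.mul
    · apply Finset.analyticAt_fun_sum
      intro j _
      exact analyticAt_const.mul (hgCa.pow _)
    · exact ((analyticOnNhd_gd α) z (hmem1 z hz)).div (hgCa.pow _) (pow_ne_zero _ hgC0)
  have hanhh : ∀ z : ℂ, ‖z‖ < δ → AnalyticAt ℂ hh z := by
    intro z hz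
    have hgCa : AnalyticAt ℂ (gC α) z := (analyticOnNhd_gC α) z (hmem1 z hz)
    apply AnalyticAt.add
    · exact analyticAt_const.mul
        ((((analyticOnNhd_uu α).deriv) z (hmem1 z hz)).div
          ((analyticOnNhd_uu α) z (hmem1 z hz)) (hδP z hz).1)
    · have hcomp : AnalyticAt ℂ (RR ∘ gC α) z :=
        (hRRan _ (by simpa [mem_ball, Complex.dist_eq] using (hδP z hz).2.1)).comp hgCa
      exact hcomp.mul ((analyticOnNhd_gd α) z (hmem1 z hz))
  have hintA : CircleIntegrable (fun z : ℂ => b m * z⁻¹) 0 r := by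
    apply ContinuousOn.circleIntegrable hr0.le
    intro z hz
    obtain ⟨hz0, -, -, -⟩ := sphere_facts z hz
    exact (continuousAt_const.mul (continuousAt_id.inv₀ hz0)).continuousWithinAt
  have hintWd : CircleIntegrable Wd 0 r := by
    apply ContinuousOn.circleIntegrable hr0.le
    intro z hz
    obtain ⟨hz0, hzδ, -, -⟩ := sphere_facts z hz
    exact (hanWd z hzδ hz0).continuousAt.continuousWithinAt
  have hinthh : CircleIntegrable hh 0 r := by
    apply ContinuousOn.circleIntegrable hr0.le
    intro z hz
    obtain ⟨-, hzδ, -, -⟩ := sphere_facts z hz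
    exact (hanhh z hzδ).continuousAt.continuousWithinAt
  have hIA : (∮ z in C(0, r), b m * z⁻¹) = b m * (2 * Real.pi * I) := by
    rw [circleIntegral.integral_const_mul]
    have h := circleIntegral.integral_sub_center_inv (0:ℂ) (ne_of_gt hr0)
    simp only [sub_zero] at h
    rw [h]
  have hIW : (∮ z in C(0, r), Wd z) = 0 := by
    apply circleIntegral.integral_eq_zero_of_hasDerivWithinAt hr0.le
    intro z hz
    obtain ⟨hz0, hzδ, hU, hgC0⟩ := sphere_facts z hz
    have main : HasDerivAt
        (fun y => ∑ j ∈ Finset.range m, (b j * (((j:ℤ) - m : ℤ) : ℂ)⁻¹) * gC α y ^ ((j:ℤ) - m))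
        (Wd z) z := by
      have h1 : HasDerivAt
          (fun y => ∑ j ∈ Finset.range m, (b j * (((j:ℤ) - m : ℤ) : ℂ)⁻¹) * gC α y ^ ((j:ℤ) - m))
          (∑ j ∈ Finset.range m, (b j * (((j:ℤ) - m : ℤ) : ℂ)⁻¹) *
            ((((j:ℤ) - m : ℤ) : ℂ) * gC α z ^ ((j:ℤ) - m - 1) * gd α z)) z := by
        apply HasDerivAt.fun_sum
        intro j _
        have hzp := ((hasDerivAt_zpow ((j:ℤ) - m) (gC α z) (Or.inl hgC0)).comp z
          (hasDerivAt_gC α (hball1 z hzδ)))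
        exact hzp.const_mul _
      convert h1 using 1
      simp only [hWddef]
      rw [Finset.sum_mul]
      apply Finset.sum_congr rfl
      intro j hj
      have hjm : (((j:ℤ) - m : ℤ) : ℂ) ≠ 0 := by
        rw [Int.cast_ne_zero]
        have := Finset.mem_range.mp hj
        omega
      have hzpow : gC α z ^ ((j:ℤ) - m - 1) = gC α z ^ j / gC α z ^ (m+1) := by
        rw [eq_div_iff (pow_ne_zero _ hgC0)]
        rw [← zpow_natCast (gC α z) j, ← zpow_natCast (gC α z) (m+1), ← zpow_add₀ hgC0]
        congr 1
        push_cast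
        ring
      rw [hzpow]
      have hc : (((j:ℤ) - m : ℤ) : ℂ)⁻¹ * (((j:ℤ) - m : ℤ) : ℂ) = 1 := inv_mul_cancel₀ hjm
      linear_combination (-(b j * (gC α z ^ j / gC α z ^ (m+1)) * gd α z)) * hc
    exact main.hasDerivWithinAt
  have hIh : (∮ z in C(0, r), hh z) = 0 := by
    apply Complex.circleIntegral_eq_zero_of_differentiable_on_off_countable hr0.le
      Set.countable_empty
    · intro z hz
      exact (hanhh z (habs_of_cball z hz)).continuousAt.continuousWithinAt
    · intro z hz
      exact (hanhh z (habs_of_cball z (ball_subset_closedBall hz.1))).differentiableAt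
  have hItot : (∮ z in C(0, r), ((1:ℂ)/(z - 0))^m • (z - 0)⁻¹ • Φ z)
      = b m * (2 * Real.pi * I) := by
    rw [circleIntegral.integral_congr hr0.le hEq]
    have hstep1 : (∮ z in C(0, r), (b m * z⁻¹ + (Wd z + hh z)))
        = (∮ z in C(0, r), b m * z⁻¹) + ∮ z in C(0, r), (Wd z + hh z) :=
      circleIntegral_add' hintA (hintWd.add hinthh)
    have hstep2 : (∮ z in C(0, r), (Wd z + hh z))
        = (∮ z in C(0, r), Wd z) + ∮ z in C(0, r), hh z :=
      circleIntegral_add' hintWd hinthh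
    rw [hstep1, hstep2, hIA, hIW, hIh]
    ring
  have hcoeff : (cauchyPowerSeries Φ 0 (Rnn:ℝ)).coeff m = b m := by
    have h := cauchyPowerSeries_apply Φ 0 (Rnn:ℝ) m 1
    have h2 : (cauchyPowerSeries Φ 0 (Rnn:ℝ)).coeff m
        = cauchyPowerSeries Φ 0 (Rnn:ℝ) m (fun _ => 1) := rfl
    have hcoe : ((Rnn : ℝ)) = r := rfl
    rw [h2, h, hcoe, hItot, smul_eq_mul]
    field_simp [Complex.two_pi_I_ne_zero]
  refine ⟨δ, hδ0, hδ1, hΦan, fun z hz => (hδP z hz).1, ?_⟩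
  have h1 := coeff_eq_iteratedDeriv hball m
  rw [hcoeff] at h1
  rw [← h1]
  exact hbm_val



end SibuyaAux


private lemma analyticOnNhd_iteratedDeriv' {F : ℂ → ℂ} {s : Set ℂ}
    (hF : AnalyticOnNhd ℂ F s) (k : ℕ) : AnalyticOnNhd ℂ (iteratedDeriv k F) s := by
  induction k with
  | zero => simpa [iteratedDeriv_zero] using hF
  | succ k ih => rw [iteratedDeriv_succ]; exact ih.deriv

private lemma re_iteratedDeriv {F : ℂ → ℂ} {ρ : ℝ}
    (hF : AnalyticOnNhd ℂ F (Metric.ball 0 ρ)) {f : ℝ → ℝ}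
    (hf : ∀ x : ℝ, |x| < ρ → f x = (F x).re) (k : ℕ) :
    ∀ x : ℝ, |x| < ρ → iteratedDeriv k f x = (iteratedDeriv k F x).re := by
  induction k with
  | zero => simpa [iteratedDeriv_zero] using hf
  | succ k ih =>
    intro x hx
    have hmem : ∀ y : ℝ, |y| < ρ → ((y : ℂ) ∈ Metric.ball (0:ℂ) ρ) := by
      intro y hy
      simpa [Metric.mem_ball, Complex.dist_eq, Complex.norm_real] using hy
    have hA : AnalyticOnNhd ℂ (iteratedDeriv k F) (Metric.ball 0 ρ) :=
      analyticOnNhd_iteratedDeriv' hF k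
    have hev : iteratedDeriv k f =ᶠ[nhds x] (fun y : ℝ => (iteratedDeriv k F y).re) := by
      have hop : IsOpen {y : ℝ | |y| < ρ} := by
        have : {y : ℝ | |y| < ρ} = Metric.ball (0:ℝ) ρ := by
          ext y; simp [Metric.mem_ball, Real.dist_eq]
        rw [this]; exact Metric.isOpen_ball
      filter_upwards [hop.mem_nhds hx] with y hy
      exact ih y hy
    rw [iteratedDeriv_succ, hev.deriv_eq]
    have hd : HasDerivAt (iteratedDeriv k F) (iteratedDeriv (k+1) F x) x := by
      have := ((hA _ (hmem x hx)).differentiableAt).hasDerivAt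
      rwa [← iteratedDeriv_succ] at this
    exact hd.real_of_complex.deriv


/-- (1/n)·[z^{n-1}]φ(z)^n = α·[1-α]_{n-1}/n!. -/
theorem sibuya_lagrange_tree (α : ℝ) (hα : α ∈ Set.Ioo (0:ℝ) 1)
    (n : ℕ) (hn : 1 ≤ n) :
    (1 / (n : ℝ)) * taylorCoeff (fun z => (sibuyaPhi α z) ^ n) (n - 1)
      = α * riseFact (1 - α) (n - 1) / n.factorial := by
  obtain ⟨hα0, hα1⟩ := hα
  obtain ⟨m, rfl⟩ : ∃ m, n = m + 1 := ⟨n - 1, by omega⟩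
  obtain ⟨δ, hδ0, hδ1, hΦan, hune, hiter⟩ := SibuyaAux.master α hα0 hα1 m
  have hmatch : ∀ x : ℝ, |x| < δ →
      (fun z => (sibuyaPhi α z) ^ (m+1)) x = (((SibuyaAux.uu α (x:ℂ))⁻¹) ^ (m+1)).re := by
    intro x hx
    have hx1 : x < 1 := lt_of_lt_of_le (lt_of_le_of_lt (le_abs_self x) hx) hδ1
    rcases eq_or_ne x 0 with rfl | hx0
    · rw [show ((0:ℝ):ℂ) = 0 from Complex.ofReal_zero, SibuyaAux.uu_zero, inv_inv,
        ← Complex.ofReal_pow, Complex.ofReal_re]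
      norm_num [sibuyaPhi]
    · simp only [sibuyaPhi, if_neg hx0]
      have hgc : SibuyaAux.gC α (x:ℂ) = ((1 - (1-x)^(1/α) : ℝ) : ℂ) := by
        rw [SibuyaAux.gC]
        rw [show (1 - ((x:ℝ):ℂ)) = (((1 - x : ℝ)) : ℂ) by push_cast; ring]
        rw [show ((α:ℂ)⁻¹) = (((α⁻¹ : ℝ)) : ℂ) by push_cast; ring]
        rw [← Complex.ofReal_cpow (by linarith : (0:ℝ) ≤ 1 - x)]
        rw [one_div]
        push_cast
        ring
      have hxC : ((x:ℝ):ℂ) ≠ 0 := Complex.ofReal_ne_zero.mpr hx0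
      have huu : SibuyaAux.uu α (x:ℂ) = SibuyaAux.gC α (x:ℂ) / (x:ℂ) := by
        rw [SibuyaAux.uu, dslope_of_ne _ hxC, slope_def_field, SibuyaAux.gC_zero,
          sub_zero, sub_zero]
      rw [huu, hgc, inv_div]
      norm_cast
  have htrans := re_iteratedDeriv hΦan hmatch m 0 (by simpa using hδ0)
  simp only [Complex.ofReal_zero] at htrans
  rw [hiter] at htrans
  have hre : ((α:ℂ) * ∏ i ∈ Finset.range m, ((i:ℂ) + 1 - (α:ℂ)))
      = (((α * riseFact (1 - α) m : ℝ)) : ℂ) := by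
    rw [riseFact, Complex.ofReal_mul, Complex.ofReal_prod]
    congr 1
    apply Finset.prod_congr rfl
    intro j _
    push_cast
    ring
  rw [hre] at htrans
  simp only [Complex.ofReal_re] at htrans
  simp only [Nat.add_sub_cancel]
  rw [taylorCoeff]
  rw [htrans]
  have hfac : ((m+1).factorial : ℝ) = (m+1) * (m.factorial : ℝ) := by
    rw [Nat.factorial_succ]; push_cast; ring
  rw [hfac]
  have h1 : (m.factorial : ℝ) ≠ 0 := Nat.cast_ne_zero.mpr (Nat.factorial_ne_zero m)
  have h2 : ((m:ℝ) + 1) ≠ 0 := by positivity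
  field_simp
  push_cast
  ring
end

section
/- For α ∈ (0,1) and fixed λ ≥ 0, the Laplace-transform limit (1 - (1 - e^{-λ k^{-1/α}})^α)^k → e^{-λ^α} as k → ∞. -/
open Filter Real

/-- slope limit: (1 - exp(-s))/s → 1 as s → 0. -/
lemma aux_slope_exp : Tendsto (fun s : ℝ => (1 - Real.exp (-s)) / s) (nhdsWithin 0 {(0:ℝ)}ᶜ) (nhds 1) := by
  have hd : HasDerivAt (fun s : ℝ => 1 - Real.exp (-s)) 1 0 := by
    have h1 : HasDerivAt (fun s : ℝ => Real.exp (-s)) (Real.exp (-(0:ℝ)) * (-1)) 0 :=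
      (Real.hasDerivAt_exp (-(0:ℝ))).comp 0 ((hasDerivAt_id (0:ℝ)).neg)
    have h2 := h1.const_sub 1
    simpa using h2
  have := hasDerivAt_iff_tendsto_slope.mp hd
  refine this.congr (fun s => ?_)
  simp [slope_def_field, div_eq_div_iff]

/-- slope limit: log(1 - x)/x → -1 as x → 0. -/
lemma aux_slope_log : Tendsto (fun x : ℝ => Real.log (1 - x) / x) (nhdsWithin 0 {(0:ℝ)}ᶜ) (nhds (-1)) := by
  have hd : HasDerivAt (fun x : ℝ => Real.log (1 - x)) (-1) 0 := by
    have h1 : HasDerivAt (fun x : ℝ => (1 : ℝ) - x) (-1) 0 := (hasDerivAt_id (0:ℝ)).const_sub 1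
    have h2 := (Real.hasDerivAt_log (by norm_num : (1:ℝ) - 0 ≠ 0)).comp 0 h1
    exact h2.congr_deriv (by norm_num)
  have := hasDerivAt_iff_tendsto_slope.mp hd
  refine this.congr (fun s => ?_)
  simp [slope_def_field, div_eq_div_iff]

/-- for α ∈ (0,1) and λ ≥ 0,
(1 - (1 - e^{-λ k^{-1/α}})^α)^k → e^{-λ^α} as k → ∞. -/
theorem sibuya_stable_limit (α : ℝ) (hα : α ∈ Set.Ioo (0:ℝ) 1)
    (lam : ℝ) (hlam : 0 ≤ lam) :
    Filter.Tendsto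
      (fun k : ℕ =>
        (1 - (1 - Real.exp (-lam * (k : ℝ) ^ (-1/α))) ^ α) ^ k)
      Filter.atTop (nhds (Real.exp (-lam ^ α))) := by
  obtain ⟨hα0, hα1⟩ := hα
  rcases eq_or_lt_of_le hlam with h0 | hpos
  · simp [← h0, Real.zero_rpow hα0.ne']
  set t : ℕ → ℝ := fun k => lam * (k : ℝ) ^ (-1/α) with ht_def
  set a : ℕ → ℝ := fun k => (1 - Real.exp (-(t k))) ^ α with ha_def
  have htpos : ∀ k : ℕ, 1 ≤ k → 0 < t k := by
    intro k hk
    exact mul_pos hpos (Real.rpow_pos_of_pos (by exact_mod_cast hk) _)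
  have ht0 : Tendsto t atTop (nhds 0) := by
    have h1 : Tendsto (fun x : ℝ => x ^ (-1/α)) atTop (nhds 0) := by
      rw [show (-1/α) = -(1/α) by ring]
      exact tendsto_rpow_neg_atTop (by positivity)
    have h2 := (h1.comp tendsto_natCast_atTop_atTop).const_mul lam
    simpa using h2
  have ht0' : Tendsto t atTop (nhdsWithin 0 {(0:ℝ)}ᶜ) := by
    refine tendsto_nhdsWithin_of_tendsto_nhds_of_eventually_within _ ht0 ?_
    filter_upwards [eventually_ge_atTop 1] with k hk
    exact (htpos k hk).ne'
  -- key limit (A): k * a k → lam ^ α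
  have hA : Tendsto (fun k : ℕ => (k : ℝ) * a k) atTop (nhds (lam ^ α)) := by
    have hratio : Tendsto (fun k : ℕ => lam * ((1 - Real.exp (-(t k))) / t k))
        atTop (nhds lam) := by
      have := (aux_slope_exp.comp ht0').const_mul lam
      simpa using this
    have hr : Tendsto (fun k : ℕ => (lam * ((1 - Real.exp (-(t k))) / t k)) ^ α)
        atTop (nhds (lam ^ α)) :=
      hratio.rpow_const (Or.inl hpos.ne')
    refine hr.congr' ?_
    filter_upwards [eventually_ge_atTop 1] with k hk
    have hkpos : (0:ℝ) < (k:ℝ) := by exact_mod_cast hk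
    have htk := htpos k hk
    have hx : 0 ≤ 1 - Real.exp (-(t k)) := by
      have := Real.exp_le_one_iff.mpr (by linarith : -(t k) ≤ 0)
      linarith
    have hlamt : lam / t k = (k:ℝ) ^ (1/α) := by
      rw [ht_def]
      have : (k:ℝ) ^ (-1/α) = ((k:ℝ) ^ (1/α))⁻¹ := by
        rw [show (-1/α) = -(1/α) by ring, Real.rpow_neg hkpos.le]
      field_simp [this]
      rw [Real.rpow_neg hkpos.le, inv_mul_cancel₀ (Real.rpow_pos_of_pos hkpos _).ne']
    have : lam * ((1 - Real.exp (-(t k))) / t k)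
        = (k:ℝ) ^ (1/α) * (1 - Real.exp (-(t k))) := by
      rw [mul_div_assoc'] at *
      rw [mul_comm lam, mul_div_assoc, hlamt, mul_comm]
    have hkk : ((k:ℝ) ^ (1/α)) ^ α = (k:ℝ) := by
      rw [← Real.rpow_mul hkpos.le, one_div, inv_mul_cancel₀ hα0.ne', Real.rpow_one]
    rw [this, Real.mul_rpow (Real.rpow_nonneg hkpos.le _) hx, hkk]
  -- a k → 0
  have ha0 : Tendsto a atTop (nhds 0) := by
    have h1 : Tendsto (fun k : ℕ => 1 - Real.exp (-(t k))) atTop (nhds 0) := by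
      have := (Real.continuous_exp.tendsto 0).comp (by simpa using ht0.neg)
      have h2 := this.const_sub 1
      simpa using h2
    have h3 := h1.rpow_const (Or.inr hα0.le)
    simpa [Real.zero_rpow hα0.ne'] using h3
  have hapos : ∀ k : ℕ, 1 ≤ k → 0 < a k := by
    intro k hk
    have htk := htpos k hk
    have : Real.exp (-(t k)) < 1 := Real.exp_lt_one_iff.mpr (by linarith)
    exact Real.rpow_pos_of_pos (by linarith) _
  have halt1 : ∀ k : ℕ, 1 ≤ k → a k < 1 := by
    intro k hk
    have htk := htpos k hk
    have he : Real.exp (-(t k)) < 1 := Real.exp_lt_one_iff.mpr (by linarith)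
    have hepos := Real.exp_pos (-(t k))
    exact Real.rpow_lt_one (by linarith) (by linarith) hα0
  have ha0' : Tendsto a atTop (nhdsWithin 0 {(0:ℝ)}ᶜ) := by
    refine tendsto_nhdsWithin_of_tendsto_nhds_of_eventually_within _ ha0 ?_
    filter_upwards [eventually_ge_atTop 1] with k hk
    exact (hapos k hk).ne'
  -- k * log (1 - a k) → - lam ^ α
  have hD : Tendsto (fun k : ℕ => (k : ℝ) * Real.log (1 - a k)) atTop (nhds (-lam ^ α)) := by
    have h1 := hA.mul (aux_slope_log.comp ha0')
    rw [show lam ^ α * (-1) = -lam ^ α by ring] at h1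
    refine h1.congr' ?_
    filter_upwards [eventually_ge_atTop 1] with k hk
    have := (hapos k hk).ne'
    simp only [Function.comp_apply]
    field_simp
  have hE := (Real.continuous_exp.tendsto _).comp hD
  refine hE.congr' ?_
  filter_upwards [eventually_ge_atTop 1] with k hk
  have h1 : (0:ℝ) < 1 - a k := by linarith [halt1 k hk]
  have : -lam * (k : ℝ) ^ (-1/α) = -(t k) := by rw [ht_def]; ring
  simp only [Function.comp, this]
  rw [Real.exp_nat_mul, Real.exp_log h1]
end

section
/- The function Ψ(z) = αz(1-z)^{-(1-α)}/(1-(1-z)^α) is strictly increasing on (0,1), with Ψ(z) → ∞ as z → 1⁻, so that for every ρ > 1 there exists a unique z_ρ ∈ (0,1) with Ψ(z_ρ) = ρ. -/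
open Real Set Filter Topology

-- key Bernoulli-type inequality
lemma sibuya_key {α u : ℝ} (hα0 : 0 < α) (hα1 : α < 1) (hu0 : 0 < u) (hu1 : u < 1) :
    u ^ α < 1 - α + α * u := by
  have h := rpow_one_add_lt_one_add_mul_self (s := u - 1) (by linarith)
    (sub_ne_zero.mpr hu1.ne) hα0 hα1
  have h2 : (1 + (u - 1)) = u := by ring
  rw [h2] at h
  calc u ^ α < 1 + α * (u - 1) := h
    _ = 1 - α + α * u := by ring

lemma sibuya_den_pos {α u : ℝ} (hα0 : 0 < α) (hu0 : 0 ≤ u) (hu1 : u < 1) :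
    0 < 1 - u ^ α := by
  have := Real.rpow_lt_one hu0 hu1 hα0
  linarith

lemma sibuya_hasDerivAt {α x : ℝ} (hα0 : 0 < α) (hα1 : α < 1) (hx0 : 0 < x) (hx1 : x < 1) :
    ∃ d, 0 < d ∧
      HasDerivAt (fun z => α * z * (1 - z) ^ (α - 1) / (1 - (1 - z) ^ α)) d x := by
  have hu0 : 0 < 1 - x := by linarith
  have hu : HasDerivAt (fun z : ℝ => 1 - z) (-1) x := (hasDerivAt_id x).const_sub 1
  have h1 : HasDerivAt (fun z : ℝ => (1 - z) ^ (α - 1))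
      (-1 * (α - 1) * (1 - x) ^ (α - 1 - 1)) x := hu.rpow_const (Or.inl hu0.ne')
  have h2 : HasDerivAt (fun z : ℝ => α * z) α x := by
    simpa using (hasDerivAt_id x).const_mul α
  have hN := h2.mul h1
  have hDa : HasDerivAt (fun z : ℝ => (1 - z) ^ α) (-1 * α * (1 - x) ^ (α - 1)) x :=
    hu.rpow_const (Or.inl hu0.ne')
  have hD : HasDerivAt (fun z : ℝ => 1 - (1 - z) ^ α)
      (-(-1 * α * (1 - x) ^ (α - 1))) x := hDa.const_sub 1
  have hDpos : 0 < 1 - (1 - x) ^ α := sibuya_den_pos hα0 hu0.le (by linarith)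
  have hq := hN.div hD hDpos.ne'
  refine ⟨_, ?_, hq⟩
  set A := (1 - x) ^ (α - 1 - 1) with hA_def
  have hA : 0 < A := Real.rpow_pos_of_pos hu0 _
  have e1 : (1 - x) ^ (α - 1) = A * (1 - x) := by
    rw [hA_def, show α - 1 = (α - 1 - 1) + 1 by ring, Real.rpow_add hu0, Real.rpow_one]
    ring_nf
  have e2 : (1 - x) ^ α = A * (1 - x) * (1 - x) := by
    rw [hA_def, show α = (α - 1 - 1) + 1 + 1 by ring, Real.rpow_add hu0,
      Real.rpow_add hu0, Real.rpow_one]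
    ring_nf
  have hkey : A * (1 - x) * (1 - x) < 1 - α + α * (1 - x) := by
    rw [← e2]; exact sibuya_key hα0 hα1 hu0 (by linarith)
  apply div_pos
  · rw [e1, e2]
    have hfact : (α * (A * (1 - x)) + α * x * (-1 * (α - 1) * A)) *
          (1 - A * (1 - x) * (1 - x)) -
          α * x * (A * (1 - x)) * -(-1 * α * (A * (1 - x))) =
        α * A * ((1 - α) + α * (1 - x) - A * (1 - x) * (1 - x)) := by ring
    simp only [Pi.mul_apply, e1]
    rw [hfact]
    apply mul_pos (mul_pos hα0 hA)
    linarith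
  · positivity

lemma sibuya_contOn {α : ℝ} (hα0 : 0 < α) (hα1 : α < 1) :
    ContinuousOn (fun z => α * z * (1 - z) ^ (α - 1) / (1 - (1 - z) ^ α))
      (Ioo (0:ℝ) 1) := by
  intro x hx
  obtain ⟨d, _, hd⟩ := sibuya_hasDerivAt hα0 hα1 hx.1 hx.2
  exact hd.continuousAt.continuousWithinAt

/-- Ψ(z) = αz(1-z)^{α-1}/(1-(1-z)^α) is strictly increasing on
(0,1), tends to ∞ as z → 1⁻, and for every ρ > 1 there is a unique
z_ρ ∈ (0,1) with Ψ(z_ρ) = ρ. -/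
theorem sibuya_saddle_point (α : ℝ) (hα : α ∈ Set.Ioo (0:ℝ) 1)
    (Ψ : ℝ → ℝ)
    (hΨ : ∀ z, Ψ z = α * z * (1 - z) ^ (α - 1) / (1 - (1 - z) ^ α)) :
    StrictMonoOn Ψ (Set.Ioo (0:ℝ) 1) ∧
    Filter.Tendsto Ψ (nhdsWithin 1 (Set.Iio (1:ℝ))) Filter.atTop ∧
    ∀ ρ : ℝ, 1 < ρ → ∃! z, z ∈ Set.Ioo (0:ℝ) 1 ∧ Ψ z = ρ := by
  obtain ⟨hα0, hα1⟩ := hα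
  have hΨf : Ψ = fun z => α * z * (1 - z) ^ (α - 1) / (1 - (1 - z) ^ α) := funext hΨ
  subst hΨf
  -- monotonicity
  have hmono : StrictMonoOn
      (fun z => α * z * (1 - z) ^ (α - 1) / (1 - (1 - z) ^ α)) (Ioo (0:ℝ) 1) := by
    apply strictMonoOn_of_deriv_pos (convex_Ioo 0 1) (sibuya_contOn hα0 hα1)
    intro x hx
    rw [interior_Ioo] at hx
    obtain ⟨d, hd, hder⟩ := sibuya_hasDerivAt hα0 hα1 hx.1 hx.2
    rw [hder.deriv]; exact hd
  -- tendsto atTop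
  have ht1 : Tendsto (fun z : ℝ => 1 - z) (𝓝[<] (1:ℝ)) (𝓝[>] (0:ℝ)) := by
    apply tendsto_nhdsWithin_of_tendsto_nhds_of_eventually_within
    · have h := Continuous.tendsto (by continuity : Continuous (fun z : ℝ => 1 - z)) 1
      simp only [sub_self] at h
      exact h.mono_left nhdsWithin_le_nhds
    · filter_upwards [eventually_mem_nhdsWithin] with z hz
      exact mem_Ioi.mpr (by simp only [mem_Iio] at hz; linarith)
  have ht2 : Tendsto (fun t : ℝ => t ^ (α - 1)) (𝓝[>] (0:ℝ)) atTop := by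
    have h0 : Tendsto (fun t : ℝ => t ^ (1 - α)) (𝓝[>] (0:ℝ)) (𝓝[>] (0:ℝ)) := by
      apply tendsto_nhdsWithin_of_tendsto_nhds_of_eventually_within
      · have hc := (Real.continuousAt_rpow_const 0 (1 - α) (Or.inr (by linarith))).tendsto
        rw [Real.zero_rpow (by intro h; apply absurd h; intro h2; linarith [h2] : (1:ℝ) - α ≠ 0)] at hc
        exact hc.mono_left nhdsWithin_le_nhds
      · filter_upwards [eventually_mem_nhdsWithin] with t ht
        exact mem_Ioi.mpr (Real.rpow_pos_of_pos ht _)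
    refine h0.inv_tendsto_nhdsGT_zero.congr' ?_
    filter_upwards [eventually_mem_nhdsWithin] with t ht
    rw [Pi.inv_apply, ← Real.rpow_neg (le_of_lt ht)]
    norm_num
  have ht3 : Tendsto (fun z : ℝ => α * z) (𝓝[<] (1:ℝ)) (𝓝 α) := by
    have h := Continuous.tendsto (by continuity : Continuous (fun z : ℝ => α * z)) 1
    simp only [mul_one] at h
    exact h.mono_left nhdsWithin_le_nhds
  have hnum : Tendsto (fun z : ℝ => α * z * (1 - z) ^ (α - 1)) (𝓝[<] (1:ℝ)) atTop :=
    ht3.pos_mul_atTop hα0 (ht2.comp ht1)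
  have hden1 : Tendsto (fun z : ℝ => 1 - (1 - z) ^ α) (𝓝[<] (1:ℝ)) (𝓝 1) := by
    have hpow : Tendsto (fun z : ℝ => (1 - z) ^ α) (𝓝[<] (1:ℝ)) (𝓝 0) := by
      have hc := (Real.continuousAt_rpow_const 0 α (Or.inr hα0.le)).tendsto
      rw [Real.zero_rpow hα0.ne'] at hc
      exact hc.comp (ht1.mono_right nhdsWithin_le_nhds)
    have h := (tendsto_const_nhds (x := (1:ℝ)) (f := 𝓝[<] (1:ℝ))).sub hpow
    simpa using h
  have hinv : Tendsto (fun z : ℝ => (1 - (1 - z) ^ α)⁻¹) (𝓝[<] (1:ℝ)) (𝓝 1) := by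
    simpa using hden1.inv₀ one_ne_zero
  have htop : Tendsto (fun z => α * z * (1 - z) ^ (α - 1) / (1 - (1 - z) ^ α))
      (𝓝[<] (1:ℝ)) atTop := by
    have h := hinv.pos_mul_atTop one_pos hnum
    refine h.congr fun z => ?_
    rw [div_eq_mul_inv, mul_comm]
  refine ⟨hmono, htop, ?_⟩
  -- existence and uniqueness
  intro ρ hρ
  have hbound : ∀ z ∈ Ioo (0:ℝ) 1,
      α * z * (1 - z) ^ (α - 1) / (1 - (1 - z) ^ α) ≤ (1 - z) ^ (α - 1) := by
    intro z hz
    have hu0 : 0 < 1 - z := by linarith [hz.2]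
    have hupow : 0 < (1 - z) ^ (α - 1) := Real.rpow_pos_of_pos hu0 _
    have hden : 0 < 1 - (1 - z) ^ α := sibuya_den_pos hα0 hu0.le (by linarith [hz.1])
    rw [div_le_iff₀ hden]
    have hk : α * z ≤ 1 - (1 - z) ^ α := by
      have := sibuya_key hα0 hα1 hu0 (by linarith [hz.1])
      linarith
    calc α * z * (1 - z) ^ (α - 1) ≤ (1 - (1 - z) ^ α) * (1 - z) ^ (α - 1) :=
          mul_le_mul_of_nonneg_right hk hupow.le
      _ = (1 - z) ^ (α - 1) * (1 - (1 - z) ^ α) := mul_comm _ _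
  have hta : Tendsto (fun z : ℝ => (1 - z) ^ (α - 1)) (𝓝[>] (0:ℝ)) (𝓝 1) := by
    have hc : ContinuousAt (fun z : ℝ => (1 - z) ^ (α - 1)) 0 := by
      apply ContinuousAt.rpow_const
      · exact (continuous_const.sub continuous_id).continuousAt
      · left; norm_num
    have h := hc.tendsto
    simp only [sub_zero, Real.one_rpow] at h
    exact h.mono_left nhdsWithin_le_nhds
  have hev : ∀ᶠ z in 𝓝[>] (0:ℝ), (1 - z) ^ (α - 1) < ρ ∧ z ∈ Ioo (0:ℝ) 1 := by
    filter_upwards [hta.eventually_lt_const hρ,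
      Ioo_mem_nhdsGT_of_mem (by constructor <;> norm_num : (0:ℝ) ∈ Ico (0:ℝ) 1)]
      with z h1 h2
    exact ⟨h1, h2⟩
  obtain ⟨a, haρ, ha⟩ := hev.exists
  have hevb : ∀ᶠ z in 𝓝[<] (1:ℝ),
      ρ < α * z * (1 - z) ^ (α - 1) / (1 - (1 - z) ^ α) ∧ z ∈ Ioo a 1 := by
    filter_upwards [htop.eventually_gt_atTop ρ,
      Ioo_mem_nhdsLT_of_mem (⟨ha.2, le_refl 1⟩ : (1:ℝ) ∈ Ioc a 1)] with z h1 h2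
    exact ⟨h1, h2⟩
  obtain ⟨b, hbρ, hb⟩ := hevb.exists
  have hab : a ≤ b := hb.1.le
  have hsub : Icc a b ⊆ Ioo (0:ℝ) 1 := fun t ht =>
    ⟨lt_of_lt_of_le ha.1 ht.1, lt_of_le_of_lt ht.2 hb.2⟩
  have hivt := intermediate_value_Icc hab ((sibuya_contOn hα0 hα1).mono hsub)
  have hρmem : ρ ∈ Icc (α * a * (1 - a) ^ (α - 1) / (1 - (1 - a) ^ α))
      (α * b * (1 - b) ^ (α - 1) / (1 - (1 - b) ^ α)) :=
    ⟨((hbound a ha).trans_lt haρ).le, hbρ.le⟩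
  obtain ⟨c, hcmem, hFc⟩ := hivt hρmem
  refine ⟨c, ⟨hsub hcmem, hFc⟩, ?_⟩
  rintro y ⟨hy, hFy⟩
  exact hmono.injOn hy (hsub hcmem) (by simpa using hFy.trans hFc.symm)
end

section
/- The Sibuya polynomials s_n(u) := n!·[z^n](1/(1-u(1-(1-z)^α))) satisfy the difference-differential recursion s_{n+1}(u) = (n+αu)s_n(u) + αu(u-1)s_n'(u) with s_0(u)=1, and consequently s_n(1) = [α]_n. -/
open Finset Filter

/-- `𝒞_{n,k} = n!·[z^n](1-(1-z)^α)^k`. -/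
noncomputable def sibuyaC (α : ℝ) (n k : ℕ) : ℝ :=
  n.factorial * taylorCoeff (fun z => (1 - (1 - z) ^ α) ^ k) n

/-- The Sibuya polynomial `s_n(u) = ∑_{k=0}^n 𝒞_{n,k} u^k`. -/
noncomputable def sibuyaPoly (α : ℝ) (n : ℕ) (u : ℝ) : ℝ :=
  ∑ k ∈ Finset.range (n + 1), sibuyaC α n k * u ^ k

lemma aux_sum_deriv (m : ℕ) (a c : ℕ → ℝ) (n : ℕ) :
    ∀ z : ℝ, z < 1 → iteratedDeriv n (fun z => ∑ j ∈ range m, a j * (1 - z) ^ (c j)) z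
      = ∑ j ∈ range m, a j * (-1:ℝ)^n * (∏ i ∈ range n, (c j - i)) * (1 - z) ^ (c j - n) := by
  induction n with
  | zero =>
    intro z hz
    simp [iteratedDeriv_zero]
  | succ n ih =>
    intro z hz
    rw [iteratedDeriv_succ]
    have hev : iteratedDeriv n (fun z => ∑ j ∈ range m, a j * (1 - z) ^ (c j))
        =ᶠ[nhds z] fun w => ∑ j ∈ range m,
          a j * (-1:ℝ)^n * (∏ i ∈ range n, (c j - i)) * (1 - w) ^ (c j - n) := by
      filter_upwards [Iio_mem_nhds hz] with w hw using ih w hw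
    rw [hev.deriv_eq]
    have hd : HasDerivAt (fun w => ∑ j ∈ range m,
          a j * (-1:ℝ)^n * (∏ i ∈ range n, (c j - i)) * (1 - w) ^ (c j - n))
        (∑ j ∈ range m, a j * (-1:ℝ)^n * (∏ i ∈ range n, (c j - i)) *
          ((c j - n) * (1 - z) ^ (c j - n - 1) * (-1))) z := by
      apply HasDerivAt.fun_sum
      intro j _
      have h1 : HasDerivAt (fun w : ℝ => 1 - w) (-1) z := (hasDerivAt_id z).const_sub 1
      have h2 : HasDerivAt (fun x : ℝ => x ^ (c j - n)) ((c j - n) * (1 - z) ^ (c j - n - 1)) (1 - z) :=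
        Real.hasDerivAt_rpow_const (Or.inl (by linarith))
      exact ((h2.comp z h1).const_mul _)
    rw [hd.deriv]
    refine Finset.sum_congr rfl fun j _ => ?_
    have he : c j - ↑n - 1 = c j - ↑(n + 1) := by push_cast; ring
    rw [he, prod_range_succ]
    ring

lemma iteratedDeriv_congr_nhds {f g : ℝ → ℝ} {x : ℝ} (h : f =ᶠ[nhds x] g) (n : ℕ) :
    iteratedDeriv n f x = iteratedDeriv n g x := by
  induction n generalizing f g with
  | zero => simpa using h.self_of_nhds
  | succ n ih =>
    rw [iteratedDeriv_succ', iteratedDeriv_succ']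
    exact ih h.deriv

lemma sibuyaC_eq (α : ℝ) (n k : ℕ) :
    sibuyaC α n k = (-1:ℝ)^n *
      ∑ j ∈ range (k+1), (k.choose j : ℝ) * (-1:ℝ)^j * ∏ i ∈ range n, (α * j - i) := by
  have hfac : (n.factorial : ℝ) ≠ 0 := Nat.cast_ne_zero.mpr n.factorial_ne_zero
  have h1 : sibuyaC α n k = iteratedDeriv n (fun z => (1 - (1 - z) ^ α) ^ k) 0 := by
    rw [sibuyaC, taylorCoeff]; field_simp
  rw [h1]
  have hev : (fun z => (1 - (1 - z) ^ α) ^ k)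
      =ᶠ[nhds (0:ℝ)] fun z => ∑ j ∈ range (k+1), ((k.choose j : ℝ) * (-1:ℝ)^j) * (1 - z) ^ (α * j) := by
    filter_upwards [Iio_mem_nhds (show (0:ℝ) < 1 by norm_num)] with z hz
    have hz' : (0:ℝ) ≤ 1 - z := by simp only [Set.mem_Iio] at hz; linarith
    have h2 : (1 - (1 - z) ^ α) ^ k = (-((1-z)^α) + 1) ^ k := by ring_nf
    rw [h2, add_pow]
    refine Finset.sum_congr rfl fun j hj => ?_
    rw [Real.rpow_mul hz', Real.rpow_natCast]
    ring
  rw [iteratedDeriv_congr_nhds hev,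
    aux_sum_deriv (k+1) (fun j => (k.choose j : ℝ) * (-1:ℝ)^j) (fun j => α * j) n 0 (by norm_num)]
  rw [Finset.mul_sum]
  refine Finset.sum_congr rfl fun j _ => ?_
  rw [sub_zero, Real.one_rpow]
  ring

lemma sibuyaC_rec (α : ℝ) (n k : ℕ) :
    sibuyaC α (n+1) (k+1)
      = ((n:ℝ) - α*(k+1)) * sibuyaC α n (k+1) + α*(k+1) * sibuyaC α n k := by
  rw [sibuyaC_eq, sibuyaC_eq, sibuyaC_eq]
  have hext : ∑ j ∈ range (k+1), (k.choose j : ℝ) * (-1:ℝ)^j * ∏ i ∈ range n, (α * j - i)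
      = ∑ j ∈ range (k+2), (k.choose j : ℝ) * (-1:ℝ)^j * ∏ i ∈ range n, (α * j - i) := by
    rw [Finset.sum_range_succ (fun j => (k.choose j : ℝ) * (-1:ℝ)^j * ∏ i ∈ range n, (α * j - i)) (k+1)]
    simp [Nat.choose_succ_self]
  rw [hext, Finset.mul_sum, Finset.mul_sum, Finset.mul_sum, mul_sum, mul_sum, ← sum_add_distrib]
  refine Finset.sum_congr rfl fun j hj => ?_
  have hj' : j ≤ k + 1 := by simp only [mem_range] at hj; omega
  have hc : ((k.choose j : ℕ) : ℝ) * ((k:ℝ)+1) = (((k+1).choose j : ℕ) : ℝ) * ((k:ℝ)+1-j) := by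
    have h := Nat.choose_mul_succ_eq k j
    have h2 : ((k + 1 - j : ℕ) : ℝ) = (k:ℝ) + 1 - j := by
      push_cast [Nat.cast_sub hj']; ring
    calc ((k.choose j : ℕ) : ℝ) * ((k:ℝ)+1) = ((k.choose j * (k+1) : ℕ) : ℝ) := by push_cast; ring
      _ = (((k+1).choose j * (k+1-j) : ℕ) : ℝ) := by rw [h]
      _ = (((k+1).choose j : ℕ) : ℝ) * ((k:ℝ)+1-j) := by push_cast [Nat.cast_sub hj']; ring
  rw [prod_range_succ]
  linear_combination (-(-1:ℝ)^n * (-1:ℝ)^j * (∏ i ∈ range n, (α * j - i)) * α) * hc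

lemma sibuyaC_zero (α : ℝ) (n : ℕ) : sibuyaC α n 0 = if n = 0 then 1 else 0 := by
  rw [sibuyaC_eq]
  rcases eq_or_ne n 0 with h | h
  · simp [h]
  · rw [if_neg h]
    have hp : (∏ i ∈ range n, (α * ((0:ℕ):ℝ) - (i:ℝ))) = 0 :=
      Finset.prod_eq_zero (Finset.mem_range.mpr (Nat.pos_of_ne_zero h)) (by norm_num)
    rw [Finset.sum_range_one, hp]
    simp

lemma sibuyaC_vanish (α : ℝ) : ∀ n k : ℕ, n < k → sibuyaC α n k = 0 := by
  intro n
  induction n with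
  | zero =>
    intro k hk
    have hk' : k ≠ 0 := by omega
    simp [sibuyaC, taylorCoeff, iteratedDeriv_zero, Real.one_rpow, zero_pow hk']
  | succ n ih =>
    intro k hk
    obtain ⟨m, rfl⟩ : ∃ m, k = m + 1 := ⟨k - 1, by omega⟩
    rw [sibuyaC_rec, ih (m+1) (by omega), ih m (by omega)]
    ring

lemma sibuyaPoly_deriv (α : ℝ) (n : ℕ) (u : ℝ) :
    deriv (sibuyaPoly α n) u = ∑ k ∈ range (n+1), sibuyaC α n k * ((k:ℝ) * u^(k-1)) := by
  have h : HasDerivAt (fun u : ℝ => ∑ k ∈ range (n+1), sibuyaC α n k * u^k)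
      (∑ k ∈ range (n+1), sibuyaC α n k * ((k:ℝ) * u^(k-1))) u :=
    HasDerivAt.fun_sum (fun k _ => (hasDerivAt_pow k u).const_mul (sibuyaC α n k))
  exact h.deriv

lemma sibuya_part2 (α : ℝ) (n : ℕ) (u : ℝ) :
    sibuyaPoly α (n + 1) u
      = ((n : ℝ) + α * u) * sibuyaPoly α n u
        + α * u * (u - 1) * deriv (sibuyaPoly α n) u := by
  rw [sibuyaPoly_deriv]
  simp only [sibuyaPoly]
  set f : ℕ → ℝ := fun m => ((n:ℝ) - α*m) * sibuyaC α n m * u^m with hf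
  have hvan : sibuyaC α n (n+1) = 0 := sibuyaC_vanish α n (n+1) (by omega)
  have hn0 : (n:ℝ) * sibuyaC α n 0 = 0 := by
    rw [sibuyaC_zero]
    rcases eq_or_ne n 0 with h | h <;> simp [h]
  have hf0 : f 0 = 0 := by
    simp only [hf, Nat.cast_zero, mul_zero, sub_zero, pow_zero, mul_one]
    exact hn0
  have hfn : f (n+1) = 0 := by simp only [hf, hvan, mul_zero, zero_mul]
  have hshift : ∑ k ∈ range (n+1), f (k+1) = ∑ k ∈ range (n+1), f k := by
    have h2 := sum_range_succ' f (n+1)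
    have h3 := sum_range_succ f (n+1)
    rw [h3, hfn, add_zero, hf0, add_zero] at h2
    linarith
  calc ∑ k ∈ range (n+1+1), sibuyaC α (n+1) k * u ^ k
      = ∑ k ∈ range (n+1), sibuyaC α (n+1) (k+1) * u^(k+1) + sibuyaC α (n+1) 0 * u^0 :=
        sum_range_succ' _ _
    _ = ∑ k ∈ range (n+1), (f (k+1) + α*((k:ℝ)+1) * sibuyaC α n k * u^(k+1)) := by
        rw [sibuyaC_zero]
        simp only [if_neg (Nat.succ_ne_zero n), zero_mul, add_zero]
        refine sum_congr rfl fun k _ => ?_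
        rw [sibuyaC_rec]
        simp only [hf]
        push_cast
        ring
    _ = ∑ k ∈ range (n+1), f (k+1) + ∑ k ∈ range (n+1), α*((k:ℝ)+1) * sibuyaC α n k * u^(k+1) :=
        sum_add_distrib
    _ = ∑ k ∈ range (n+1), (f k + α*((k:ℝ)+1) * sibuyaC α n k * u^(k+1)) := by
        rw [hshift, ← sum_add_distrib]
    _ = ((n : ℝ) + α * u) * ∑ k ∈ range (n+1), sibuyaC α n k * u ^ k
        + α * u * (u - 1) * ∑ k ∈ range (n+1), sibuyaC α n k * ((k:ℝ) * u^(k-1)) := by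
        rw [Finset.mul_sum, Finset.mul_sum, ← sum_add_distrib]
        refine sum_congr rfl fun k _ => ?_
        simp only [hf]
        cases k with
        | zero => push_cast; ring_nf
        | succ m =>
          simp only [Nat.add_sub_cancel]
          push_cast
          ring

/-- the Sibuya polynomials satisfy
s_{n+1}(u) = (n+αu)s_n(u) + αu(u-1)s_n'(u), s_0(u) = 1, and s_n(1) = [α]_n. -/
theorem sibuya_polynomials_recursion (α : ℝ) (hα : α ∈ Set.Ioo (0:ℝ) 1) :
    (∀ u : ℝ, sibuyaPoly α 0 u = 1) ∧
    (∀ n : ℕ, ∀ u : ℝ,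
      sibuyaPoly α (n + 1) u
        = ((n : ℝ) + α * u) * sibuyaPoly α n u
          + α * u * (u - 1) * deriv (sibuyaPoly α n) u) ∧
    (∀ n : ℕ, sibuyaPoly α n 1 = riseFact α n) := by
  have h0 : ∀ u : ℝ, sibuyaPoly α 0 u = 1 := by
    intro u
    simp [sibuyaPoly, sibuyaC, taylorCoeff, iteratedDeriv_zero]
  refine ⟨h0, fun n u => sibuya_part2 α n u, ?_⟩
  intro n
  induction n with
  | zero => simp [h0, riseFact]
  | succ n ih =>
    have hr : riseFact α (n+1) = riseFact α n * (α + n) := prod_range_succ _ _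
    rw [sibuya_part2, ih, hr]
    ring
end
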